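/- Let 𝒴 be a nonempty finite alphabet, P a probability distribution on 𝒴, n a positive integer, Y_1, …, Y_n i.i.d. random variables with law P, and P̂ⁿ the empirical distribution P̂ⁿ(y) := |{i ∈ [n] : Y_i = y}|/n. Then for every α ∈ (0, 1/2], with probability at least 1−α, d_TV(P̂ⁿ, P) ≤ √(4|𝒴| log(1/α)/n). -/

import Mathlib

open MeasureTheory ProbabilityTheory

/-- A probability distribution on a finite alphabet. -/
def IsDist {𝒴 : Type*} [Fintype 𝒴] (P : 𝒴 → ℝ) : Prop :=
  (∀ y, 0 ≤ P y) ∧ ∑ y, P y = 1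

/-- Total variation distance (unnormalized ℓ₁ distance, valued in [0,2]). -/
noncomputable def dTV {𝒴 : Type*} [Fintype 𝒴] (P Q : 𝒴 → ℝ) : ℝ :=
  ∑ y, |P y - Q y|

/-- Empirical distribution of `n` samples `Y 0, …, Y (n-1)`. -/
noncomputable def empDist {𝒴 : Type*} [Fintype 𝒴] [DecidableEq 𝒴] {n : ℕ}
    (Ys : Fin n → 𝒴) : 𝒴 → ℝ :=
  fun y => ((Finset.univ.filter fun i => Ys i = y).card : ℝ) / n

open Real
open scoped ENNReal

lemma bern_mgf_le {p q l : ℝ} (hp : 0 ≤ p) (hq : 0 ≤ q) (hpq : p + q = 1) :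
    p * exp (l * (1 - p)) + q * exp (l * (-p)) ≤ exp (l ^ 2 / 8) := by
  have hD : ∀ x : ℝ, 0 < p * exp x + q := by
    intro x
    rcases eq_or_lt_of_le hp with h | h
    · have : q = 1 := by linarith
      simp [← h, this]
    · have := mul_pos h (exp_pos x)
      linarith
  set h : ℝ → ℝ := fun x => x ^ 2 / 8 + p * x - log (p * exp x + q) with hh
  set g : ℝ → ℝ := fun x => x / 4 + p - p * exp x / (p * exp x + q) with hg
  have hasDerivAt_h : ∀ x, HasDerivAt h (g x) x := by
    intro x
    have h1 : HasDerivAt (fun y : ℝ => y ^ 2 / 8) (x / 4) x := by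
      have := (hasDerivAt_pow 2 x).div_const 8
      convert this using 1
      norm_num
      · rfl
      · rfl
      · push_cast; ring
    have h2 : HasDerivAt (fun y : ℝ => p * y) p x := by
      simpa using (hasDerivAt_id x).const_mul p
    have hDd : HasDerivAt (fun y : ℝ => p * exp y + q) (p * exp x) x :=
      ((Real.hasDerivAt_exp x).const_mul p).add_const q
    have h3 : HasDerivAt (fun y : ℝ => log (p * exp y + q))
        (p * exp x / (p * exp x + q)) x := hDd.log (hD x).ne'
    exact (h1.add h2).sub h3
  have hasDerivAt_g : ∀ x, HasDerivAt g
      (1/4 - (p * exp x * (p * exp x + q) - p * exp x * (p * exp x)) / (p * exp x + q) ^ 2) x := by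
    intro x
    have hDd : HasDerivAt (fun y : ℝ => p * exp y + q) (p * exp x) x :=
      ((Real.hasDerivAt_exp x).const_mul p).add_const q
    have htop : HasDerivAt (fun y : ℝ => p * exp y) (p * exp x) x :=
      (Real.hasDerivAt_exp x).const_mul p
    have hq' : HasDerivAt (fun y : ℝ => p * exp y / (p * exp y + q))
        ((p * exp x * (p * exp x + q) - p * exp x * (p * exp x)) / (p * exp x + q) ^ 2) x :=
      htop.div hDd (hD x).ne'
    have h1 : HasDerivAt (fun y : ℝ => y / 4 + p) (1/4) x := by
      simpa using ((hasDerivAt_id x).div_const 4).add_const p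
    exact h1.sub hq'
  have hg_nonneg : ∀ x, 0 ≤ 1/4 -
      (p * exp x * (p * exp x + q) - p * exp x * (p * exp x)) / (p * exp x + q) ^ 2 := by
    intro x
    rw [sub_nonneg, div_le_iff₀ (pow_pos (hD x) 2)]
    nlinarith [sq_nonneg (p * exp x - q), exp_pos x, hD x]
  have hgmono : Monotone g :=
    monotone_of_deriv_nonneg (fun x => (hasDerivAt_g x).differentiableAt)
      (fun x => by rw [(hasDerivAt_g x).deriv]; exact hg_nonneg x)
  have hg0 : g 0 = 0 := by
    simp only [hg, Real.exp_zero, mul_one, hpq]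
    norm_num
  have hdiff : Differentiable ℝ h := fun x => (hasDerivAt_h x).differentiableAt
  have hderiv : ∀ x, deriv h x = g x := fun x => (hasDerivAt_h x).deriv
  have h0 : h 0 = 0 := by
    simp [hh, Real.exp_zero, hpq]
  have hpos : ∀ x, 0 ≤ h x := by
    intro x
    rcases le_total 0 x with hx | hx
    · have hmono : MonotoneOn h (Set.Ici 0) := by
        apply monotoneOn_of_deriv_nonneg (convex_Ici 0) hdiff.continuous.continuousOn
          (hdiff.differentiableOn)
        intro y hy
        rw [interior_Ici] at hy
        rw [hderiv]
        calc (0:ℝ) = g 0 := hg0.symm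
          _ ≤ g y := hgmono (le_of_lt hy)
      have := hmono Set.self_mem_Ici hx hx
      linarith [h0 ▸ this]
    · have hanti : AntitoneOn h (Set.Iic 0) := by
        apply antitoneOn_of_deriv_nonpos (convex_Iic 0) hdiff.continuous.continuousOn
          (hdiff.differentiableOn)
        intro y hy
        rw [interior_Iic] at hy
        rw [hderiv]
        calc g y ≤ g 0 := hgmono (le_of_lt hy)
          _ = 0 := hg0
      have := hanti hx Set.self_mem_Iic hx
      linarith [h0 ▸ this]
  have hlog : log (p * exp l + q) ≤ l ^ 2 / 8 + p * l := by
    have := hpos l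
    simp only [hh] at this
    linarith
  have hle : p * exp l + q ≤ exp (l ^ 2 / 8 + p * l) :=
    (Real.log_le_iff_le_exp (hD l)).mp hlog
  calc p * exp (l * (1 - p)) + q * exp (l * (-p))
      = exp (-(l * p)) * (p * exp l + q) := by
        rw [show l * (1 - p) = -(l * p) + l by ring, Real.exp_add,
          show l * (-p) = -(l * p) by ring]
        ring
    _ ≤ exp (-(l * p)) * exp (l ^ 2 / 8 + p * l) := by
        exact mul_le_mul_of_nonneg_left hle (exp_pos _).le
    _ = exp (l ^ 2 / 8) := by
        rw [← Real.exp_add]; ring_nf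

lemma mgf_bern {Ω : Type*} [MeasurableSpace Ω] (μ : Measure Ω) [IsProbabilityMeasure μ]
    {p : ℝ} (hp0 : 0 ≤ p) (hp1 : p ≤ 1) {B : Set Ω} (hB : MeasurableSet B)
    (hμB : μ B = ENNReal.ofReal p) {Z : Ω → ℝ}
    (hZ1 : ∀ ω ∈ B, Z ω = 1 - p) (hZ2 : ∀ ω ∉ B, Z ω = -p) (l : ℝ) :
    Integrable (fun ω => exp (l * Z ω)) μ ∧ mgf Z μ l ≤ exp (l ^ 2 / 8) := by
  have hfun : (fun ω => exp (l * Z ω)) = fun ω =>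
      B.indicator (fun _ => exp (l * (1 - p))) ω
        + Bᶜ.indicator (fun _ => exp (l * (-p))) ω := by
    funext ω
    by_cases hω : ω ∈ B
    · simp [Set.indicator_of_mem hω, Set.indicator_of_notMem (Set.notMem_compl_iff.mpr hω), hZ1 ω hω]
    · rw [Set.indicator_of_notMem hω, Set.indicator_of_mem (Set.mem_compl hω), hZ2 ω hω]
      ring_nf
  have hint1 : Integrable (B.indicator fun _ : Ω => exp (l * (1 - p))) μ :=
    (integrable_const _).indicator hB
  have hint2 : Integrable (Bᶜ.indicator fun _ : Ω => exp (l * (-p))) μ :=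
    (integrable_const _).indicator hB.compl
  have hint : Integrable (fun ω => exp (l * Z ω)) μ := by
    rw [hfun]; exact hint1.add hint2
  refine ⟨hint, ?_⟩
  have hμBc : μ Bᶜ = ENNReal.ofReal (1 - p) := by
    rw [prob_compl_eq_one_sub hB, hμB, ENNReal.ofReal_sub 1 hp0, ENNReal.ofReal_one]
  have : mgf Z μ l = p * exp (l * (1 - p)) + (1 - p) * exp (l * (-p)) := by
    rw [mgf, hfun, integral_add hint1 hint2, integral_indicator_const _ hB,
      integral_indicator_const _ hB.compl, measureReal_def, measureReal_def, hμB, hμBc,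
      ENNReal.toReal_ofReal hp0, ENNReal.toReal_ofReal (by linarith)]
    simp [smul_eq_mul]
  rw [this]
  exact bern_mgf_le hp0 (by linarith) (by ring)

lemma chernoff_sum {Ω : Type*} [MeasurableSpace Ω] (μ : Measure Ω) [IsProbabilityMeasure μ]
    {n : ℕ} (Z : Fin n → Ω → ℝ)
    (hindep : iIndepFun Z μ) (hmeas : ∀ i, Measurable (Z i))
    {p : ℝ} (hp0 : 0 ≤ p) (hp1 : p ≤ 1)
    (hZ : ∀ i, ∃ B : Set Ω, MeasurableSet B ∧ μ B = ENNReal.ofReal p ∧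
      (∀ ω ∈ B, Z i ω = 1 - p) ∧ ∀ ω ∉ B, Z i ω = -p)
    (c l : ℝ) (hl : 0 ≤ l) :
    μ {ω | c ≤ ∑ i, Z i ω} ≤ ENNReal.ofReal (exp (-l * c + n * l ^ 2 / 8)) := by
  have hint : ∀ i ∈ Finset.univ, Integrable (fun ω => exp (l * Z i ω)) μ := by
    intro i _
    obtain ⟨B, hB, hμB, hZi1, hZi2⟩ := hZ i
    exact (mgf_bern μ hp0 hp1 hB hμB hZi1 hZi2 l).1
  have hintS : Integrable (fun ω => exp (l * (∑ i, Z i) ω)) μ :=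
    hindep.integrable_exp_mul_sum hmeas hint
  have key := measure_ge_le_exp_mul_mgf (μ := μ) (X := ∑ i, Z i) c hl hintS
  have hmgf : mgf (∑ i, Z i) μ l ≤ exp (l ^ 2 / 8) ^ n := by
    rw [hindep.mgf_sum hmeas]
    calc ∏ i, mgf (Z i) μ l ≤ ∏ _i : Fin n, exp (l ^ 2 / 8) := by
          apply Finset.prod_le_prod (fun i _ => mgf_nonneg)
          intro i _
          obtain ⟨B, hB, hμB, hZi1, hZi2⟩ := hZ i
          exact (mgf_bern μ hp0 hp1 hB hμB hZi1 hZi2 l).2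
      _ = exp (l ^ 2 / 8) ^ n := by simp
  have hset : {ω | c ≤ ∑ i, Z i ω} = {ω | c ≤ (∑ i, Z i) ω} := by
    simp [Finset.sum_apply]
  rw [hset]
  calc μ {ω | c ≤ (∑ i, Z i) ω}
      = ENNReal.ofReal (μ {ω | c ≤ (∑ i, Z i) ω}).toReal :=
        (ENNReal.ofReal_toReal (measure_ne_top _ _)).symm
    _ ≤ ENNReal.ofReal (exp (-l * c + n * l ^ 2 / 8)) := by
        apply ENNReal.ofReal_le_ofReal
        refine key.trans ?_
        calc exp (-l * c) * mgf (∑ i, Z i) μ l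
            ≤ exp (-l * c) * exp (l ^ 2 / 8) ^ n :=
              mul_le_mul_of_nonneg_left hmgf (exp_pos _).le
          _ = exp (-l * c + n * l ^ 2 / 8) := by
              rw [← Real.exp_nat_mul, ← Real.exp_add]
              ring_nf

/-- if `Y₁, …, Yₙ` are i.i.d. with law `P` on a finite alphabet 𝒴
and `P̂ⁿ` is the empirical distribution, then for any `α ∈ (0,1/2]`, with
probability at least `1 − α`, `d_TV(P̂ⁿ, P) ≤ √(4|𝒴|·log(1/α)/n)`. -/
theorem stmt_8 {𝒴 : Type*} [Fintype 𝒴] [Nonempty 𝒴] [DecidableEq 𝒴]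
    [MeasurableSpace 𝒴] [MeasurableSingletonClass 𝒴]
    {Ω : Type*} [MeasurableSpace Ω] (μ : Measure Ω) [IsProbabilityMeasure μ]
    (P : 𝒴 → ℝ) (hP : IsDist P) (n : ℕ) (hn : 0 < n)
    (Y : Fin n → Ω → 𝒴) (hmeas : ∀ i, Measurable (Y i))
    (hindep : iIndepFun Y μ)
    (hlaw : ∀ i y, μ (Y i ⁻¹' {y}) = ENNReal.ofReal (P y))
    (α : ℝ) (hα0 : 0 < α) (hα1 : α ≤ 1 / 2) :
    ENNReal.ofReal (1 - α) ≤
      μ {ω | dTV (empDist fun i => Y i ω) P ≤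
        Real.sqrt (4 * Fintype.card 𝒴 * Real.log (1 / α) / n)} := by
  obtain ⟨hPnn, hPsum⟩ := hP
  have hn' : (n : ℝ) ≠ 0 := Nat.cast_ne_zero.mpr hn.ne'
  have hnpos : (0:ℝ) < n := Nat.cast_pos.mpr hn
  set k : ℕ := Fintype.card 𝒴 with hk
  have hk1 : 1 ≤ k := Fintype.card_pos
  set L : ℝ := Real.log (1 / α) with hL
  have hLpos : 0 < L := Real.log_pos (by rw [lt_div_iff₀ hα0]; linarith)
  set t : ℝ := Real.sqrt (4 * (k : ℝ) * L / n) with ht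
  have ht0 : 0 ≤ t := Real.sqrt_nonneg _
  have ht2 : t ^ 2 = 4 * (k : ℝ) * L / n := Real.sq_sqrt (by positivity)
  -- Chernoff for each subset A
  have hchern : ∀ A : Finset 𝒴,
      μ {ω | (n : ℝ) * (t / 2) ≤
          ∑ i, ((if Y i ω ∈ A then (1:ℝ) else 0) - ∑ y ∈ A, P y)} ≤
        ENNReal.ofReal (exp (-((n : ℝ) * t ^ 2 / 2))) := by
    intro A
    set pA : ℝ := ∑ y ∈ A, P y with hpA
    have hpA0 : 0 ≤ pA := Finset.sum_nonneg fun y _ => hPnn y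
    have hpA1 : pA ≤ 1 := by
      rw [← hPsum]
      exact Finset.sum_le_sum_of_subset_of_nonneg (Finset.subset_univ A)
        fun y _ _ => hPnn y
    set g : 𝒴 → ℝ := fun y => (if y ∈ A then (1:ℝ) else 0) - pA with hgdef
    have hZindep : iIndepFun
        (fun i => g ∘ Y i) μ :=
      hindep.comp (fun _ => g) (fun _ => Measurable.of_discrete)
    have hZmeas : ∀ i, Measurable (g ∘ Y i) :=
      fun i => Measurable.of_discrete.comp (hmeas i)
    have hZ : ∀ i : Fin n, ∃ B : Set Ω, MeasurableSet B ∧ μ B = ENNReal.ofReal pA ∧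
        (∀ ω ∈ B, (g ∘ Y i) ω = 1 - pA) ∧ ∀ ω ∉ B, (g ∘ Y i) ω = -pA := by
      intro i
      refine ⟨Y i ⁻¹' ↑A, (hmeas i) (Set.Finite.measurableSet A.finite_toSet), ?_, ?_, ?_⟩
      · have hsplit : Y i ⁻¹' ↑A = ⋃ y ∈ A, Y i ⁻¹' {y} := by
          ext ω; simp
        rw [hsplit, measure_biUnion_finset ?_ ?_]
        · simp_rw [hlaw i]
          exact (ENNReal.ofReal_sum_of_nonneg fun y _ => hPnn y).symm
        · intro y _ z _ hyz
          simp only [Function.onFun, Set.disjoint_left]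
          intro ω h1 h2
          simp only [Set.mem_preimage, Set.mem_singleton_iff] at h1 h2
          exact hyz (h1 ▸ h2 ▸ rfl)
        · exact fun y _ => (hmeas i) (MeasurableSet.singleton y)
      · intro ω hω
        simp only [Set.mem_preimage, Finset.mem_coe] at hω
        simp [hgdef, hω]
      · intro ω hω
        simp only [Set.mem_preimage, Finset.mem_coe] at hω
        simp [hgdef, hω]
    have key := chernoff_sum μ (fun i => g ∘ Y i) hZindep hZmeas hpA0 hpA1 hZ
      ((n : ℝ) * (t / 2)) (2 * t) (by positivity)
    have harg : -(2 * t) * ((n : ℝ) * (t / 2)) + (n : ℝ) * (2 * t) ^ 2 / 8 =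
        -((n : ℝ) * t ^ 2 / 2) := by ring
    rw [harg] at key
    exact key
  -- deterministic inclusion
  have hsub : ∀ ω, t < dTV (empDist fun i => Y i ω) P →
      ∃ A : Finset 𝒴, (n : ℝ) * (t / 2) ≤
        ∑ i, ((if Y i ω ∈ A then (1:ℝ) else 0) - ∑ y ∈ A, P y) := by
    intro ω hω
    set d : 𝒴 → ℝ := fun y => empDist (fun i => Y i ω) y - P y with hd
    have hcards : ∑ y, ((Finset.univ.filter fun i => Y i ω = y).card : ℝ) = n := by
      have h := Finset.card_eq_sum_card_fiberwise
        (f := fun i => Y i ω) (s := Finset.univ) (t := Finset.univ)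
        (fun x _ => Finset.mem_univ _)
      rw [Finset.card_univ, Fintype.card_fin] at h
      exact_mod_cast congrArg (Nat.cast : ℕ → ℝ) h.symm
    have hsum1 : ∑ y, d y = 0 := by
      simp only [hd, empDist]
      rw [Finset.sum_sub_distrib, hPsum, ← Finset.sum_div, hcards, div_self hn']
      ring
    set A : Finset 𝒴 := Finset.univ.filter fun y => 0 ≤ d y with hA
    have hsplit := Finset.sum_filter_add_sum_filter_not Finset.univ (fun y => 0 ≤ d y) d
    have habs : dTV (empDist fun i => Y i ω) P = 2 * ∑ y ∈ A, d y := by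
      have h1 : dTV (empDist fun i => Y i ω) P = ∑ y, |d y| := rfl
      rw [h1, ← Finset.sum_filter_add_sum_filter_not Finset.univ (fun y => 0 ≤ d y)
        (fun y => |d y|)]
      have e1 : ∑ y ∈ Finset.univ.filter (fun y => 0 ≤ d y), |d y| = ∑ y ∈ A, d y :=
        Finset.sum_congr rfl fun y hy => abs_of_nonneg (Finset.mem_filter.mp hy).2
      have e2 : ∑ y ∈ Finset.univ.filter (fun y => ¬ 0 ≤ d y), |d y| =
          - ∑ y ∈ Finset.univ.filter (fun y => ¬ 0 ≤ d y), d y := by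
        rw [← Finset.sum_neg_distrib]
        exact Finset.sum_congr rfl fun y hy =>
          abs_of_neg (not_le.mp (Finset.mem_filter.mp hy).2)
      rw [e1, e2]
      have : ∑ y ∈ Finset.univ.filter (fun y => ¬ 0 ≤ d y), d y = - ∑ y ∈ A, d y := by
        rw [hsum1] at hsplit
        linarith [hsplit]
      rw [this]
      ring
    have hS1 : t / 2 < ∑ y ∈ A, d y := by
      rw [habs] at hω
      linarith
    refine ⟨A, ?_⟩
    have hswap : ∑ i, (if Y i ω ∈ A then (1:ℝ) else 0) =
        ∑ y ∈ A, ((Finset.univ.filter fun i => Y i ω = y).card : ℝ) := by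
      have h1 : ∀ i : Fin n, (if Y i ω ∈ A then (1:ℝ) else 0) =
          ∑ y ∈ A, if Y i ω = y then (1:ℝ) else 0 := fun i =>
        (Finset.sum_ite_eq A (Y i ω) fun _ => (1:ℝ)).symm
      simp_rw [h1]
      rw [Finset.sum_comm]
      exact Finset.sum_congr rfl fun y _ => by
        rw [Finset.sum_boole]
    have hkey : ∑ i, ((if Y i ω ∈ A then (1:ℝ) else 0) - ∑ y ∈ A, P y) =
        (n : ℝ) * ∑ y ∈ A, d y := by
      rw [Finset.sum_sub_distrib, hswap, Finset.sum_const, Finset.card_univ,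
        Fintype.card_fin, nsmul_eq_mul, Finset.mul_sum]
      rw [Finset.mul_sum]
      rw [← Finset.sum_sub_distrib]
      refine Finset.sum_congr rfl fun y _ => ?_
      simp only [hd, empDist]
      field_simp
    rw [hkey]
    have := mul_le_mul_of_nonneg_left hS1.le hnpos.le
    linarith
  -- union bound
  have hbad : μ {ω | t < dTV (empDist fun i => Y i ω) P} ≤ ENNReal.ofReal α := by
    have hsub' : {ω | t < dTV (empDist fun i => Y i ω) P} ⊆
        ⋃ A ∈ (Finset.univ : Finset (Finset 𝒴)),
          {ω | (n : ℝ) * (t / 2) ≤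
            ∑ i, ((if Y i ω ∈ A then (1:ℝ) else 0) - ∑ y ∈ A, P y)} := by
      intro ω hω
      obtain ⟨A, hA⟩ := hsub ω hω
      simp only [Set.mem_iUnion]
      exact ⟨A, Finset.mem_univ A, hA⟩
    have hreal : (2:ℝ) ^ k * exp (-((n : ℝ) * t ^ 2 / 2)) ≤ α := by
      have hnt : (n : ℝ) * t ^ 2 / 2 = 2 * k * L := by
        rw [ht2]; field_simp; ring
      have hlogα : L = - Real.log α := by rw [hL, one_div, Real.log_inv]
      have hexp : exp (-((n : ℝ) * t ^ 2 / 2)) = α ^ (2 * k) := by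
        rw [hnt]
        have harg2 : -(2 * (k:ℝ) * L) = ((2 * k : ℕ) : ℝ) * Real.log α := by
          rw [hlogα]; push_cast; ring
        rw [harg2, Real.exp_nat_mul, Real.exp_log hα0]
      rw [hexp]
      calc (2:ℝ) ^ k * α ^ (2 * k) = (2 * α ^ 2) ^ k := by
            rw [pow_mul, mul_pow]
        _ ≤ α ^ k := pow_le_pow_left₀ (by positivity) (by nlinarith) k
        _ ≤ α := by
            calc α ^ k ≤ α ^ 1 := pow_le_pow_of_le_one hα0.le (by linarith) hk1
              _ = α := pow_one α
    calc μ {ω | t < dTV (empDist fun i => Y i ω) P}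
        ≤ μ (⋃ A ∈ (Finset.univ : Finset (Finset 𝒴)),
          {ω | (n : ℝ) * (t / 2) ≤
            ∑ i, ((if Y i ω ∈ A then (1:ℝ) else 0) - ∑ y ∈ A, P y)}) :=
          measure_mono hsub'
      _ ≤ ∑ A ∈ (Finset.univ : Finset (Finset 𝒴)),
          μ {ω | (n : ℝ) * (t / 2) ≤
            ∑ i, ((if Y i ω ∈ A then (1:ℝ) else 0) - ∑ y ∈ A, P y)} :=
          measure_biUnion_finset_le _ _
      _ ≤ ∑ _A ∈ (Finset.univ : Finset (Finset 𝒴)),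
          ENNReal.ofReal (exp (-((n : ℝ) * t ^ 2 / 2))) :=
          Finset.sum_le_sum fun A _ => hchern A
      _ = (2 ^ k : ℕ) * ENNReal.ofReal (exp (-((n : ℝ) * t ^ 2 / 2))) := by
          rw [Finset.sum_const, Finset.card_univ, Fintype.card_finset, nsmul_eq_mul]
      _ ≤ ENNReal.ofReal α := by
          rw [← ENNReal.ofReal_natCast (2 ^ k), ← ENNReal.ofReal_mul (by positivity)]
          apply ENNReal.ofReal_le_ofReal
          calc ((2 ^ k : ℕ) : ℝ) * exp (-((n : ℝ) * t ^ 2 / 2))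
              = (2:ℝ) ^ k * exp (-((n : ℝ) * t ^ 2 / 2)) := by push_cast; ring
            _ ≤ α := hreal
  -- conclusion
  have hcover : (1 : ℝ≥0∞) ≤ μ {ω | dTV (empDist fun i => Y i ω) P ≤ t}
      + ENNReal.ofReal α := by
    have huniv : (Set.univ : Set Ω) ⊆ {ω | dTV (empDist fun i => Y i ω) P ≤ t}
        ∪ {ω | t < dTV (empDist fun i => Y i ω) P} := by
      intro ω _
      rcases le_or_gt (dTV (empDist fun i => Y i ω) P) t with h | h
      · exact Or.inl h
      · exact Or.inr h
    calc (1 : ℝ≥0∞) = μ Set.univ := measure_univ.symm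
      _ ≤ μ ({ω | dTV (empDist fun i => Y i ω) P ≤ t}
          ∪ {ω | t < dTV (empDist fun i => Y i ω) P}) := measure_mono huniv
      _ ≤ μ {ω | dTV (empDist fun i => Y i ω) P ≤ t}
          + μ {ω | t < dTV (empDist fun i => Y i ω) P} := measure_union_le _ _
      _ ≤ _ := add_le_add_right hbad _
  calc ENNReal.ofReal (1 - α) = 1 - ENNReal.ofReal α := by
        rw [ENNReal.ofReal_sub 1 hα0.le, ENNReal.ofReal_one]
    _ ≤ μ {ω | dTV (empDist fun i => Y i ω) P ≤ t} := tsub_le_iff_right.mpr hcover
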